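/- Let Z be a coalescent-walk process on a (finite or infinite) integer interval I. Then the relation ≤_Z is a total order on I: it is reflexive, antisymmetric, transitive, and any two elements of I are comparable. -/
import Mathlib


/-- `Z` is a coalescent-walk process on the integer interval `I`: each trajectory starts at `0`
at its starting time, and trajectories, once weakly ordered at some time, stay in that order at
all later times. -/
def isCoalescentOn (I : Set ℤ) (Z : ℤ → ℤ → ℤ) : Prop :=
  (∀ t ∈ I, Z t t = 0) ∧
  ∀ t ∈ I, ∀ t' ∈ I, t ≤ t' → ∀ k ∈ I, t' ≤ k →
    ((Z t' k ≤ Z t k → ∀ k' ∈ I, k ≤ k' → Z t' k' ≤ Z t k') ∧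
     (Z t k ≤ Z t' k → ∀ k' ∈ I, k ≤ k' → Z t k' ≤ Z t' k'))

/-- The relation `≤_Z` associated with a coalescent-walk process `Z`:
`i ≤_Z i`; for `i < j`, `i ≤_Z j` if `Z^{(i)}_j < 0` and `j ≤_Z i` if `Z^{(i)}_j ≥ 0`. -/
def leZ (Z : ℤ → ℤ → ℤ) (i j : ℤ) : Prop :=
  i = j ∨ (i < j ∧ Z i j < 0) ∨ (j < i ∧ 0 ≤ Z j i)

private lemma key {I : Set ℤ} {Z : ℤ → ℤ → ℤ} (hZ : isCoalescentOn I Z)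
    {t t' k : ℤ} (ht : t ∈ I) (ht' : t' ∈ I) (hk : k ∈ I)
    (h1 : t ≤ t') (h2 : t' ≤ k) :
    (0 ≤ Z t t' → Z t' k ≤ Z t k) ∧ (Z t t' ≤ 0 → Z t k ≤ Z t' k) := by
  have h := hZ.2 t ht t' ht' h1 t' ht' le_rfl
  have h0 := hZ.1 t' ht'
  constructor
  · intro hp
    exact h.1 (by rw [h0]; exact hp) k hk h2
  · intro hp
    exact h.2 (by rw [h0]; exact hp) k hk h2

/-- For a coalescent-walk process `Z` on a (finite or infinite) integer interval `I`, the
relation `≤_Z` is a total order on `I`: reflexive, antisymmetric, transitive, and any two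
elements are comparable. -/
theorem leZ_isTotalOrder (I : Set ℤ) (hI : I.OrdConnected)
    (Z : ℤ → ℤ → ℤ) (hZ : isCoalescentOn I Z) :
    (∀ i ∈ I, leZ Z i i) ∧
    (∀ i ∈ I, ∀ j ∈ I, leZ Z i j → leZ Z j i → i = j) ∧
    (∀ i ∈ I, ∀ j ∈ I, ∀ k ∈ I, leZ Z i j → leZ Z j k → leZ Z i k) ∧
    (∀ i ∈ I, ∀ j ∈ I, leZ Z i j ∨ leZ Z j i) := by
  refine ⟨fun i _ => Or.inl rfl, ?_, ?_, ?_⟩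
  · rintro i hi j hj (h | ⟨hlt, hz⟩ | ⟨hlt, hz⟩) (h' | ⟨hlt', hz'⟩ | ⟨hlt', hz'⟩) <;> omega
  · rintro i hi j hj k hk (rfl | ⟨hlt, hz⟩ | ⟨hlt, hz⟩) (rfl | ⟨hlt', hz'⟩ | ⟨hlt', hz'⟩)
    · exact Or.inl rfl
    · exact Or.inr (Or.inl ⟨hlt', hz'⟩)
    · exact Or.inr (Or.inr ⟨hlt', hz'⟩)
    · exact Or.inr (Or.inl ⟨hlt, hz⟩)
    · -- i < j, Z i j < 0 ; j < k, Z j k < 0 ; want i < k, Z i k < 0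
      refine Or.inr (Or.inl ⟨by omega, ?_⟩)
      have := (key hZ hi hj hk hlt.le hlt'.le).2 hz.le
      omega
    · -- i < j, Z i j < 0 ; k < j, 0 ≤ Z k j
      rcases lt_trichotomy i k with h | h | h
      · -- i < k < j, want Z i k < 0 : if 0 ≤ Z i k then Z i j ≥ Z k j ≥ 0
        refine Or.inr (Or.inl ⟨h, ?_⟩)
        by_contra hc
        have := (key hZ hi hk hj h.le hlt'.le).1 (by omega)
        omega
      · exact Or.inl h
      · -- k < i < j, want 0 ≤ Z k i : if Z k i < 0 then Z k j ≤ Z i j < 0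
        refine Or.inr (Or.inr ⟨h, ?_⟩)
        by_contra hc
        have := (key hZ hk hi hj h.le hlt.le).2 (by omega)
        omega
    · exact Or.inr (Or.inr ⟨hlt, hz⟩)
    · -- j < i, 0 ≤ Z j i ; j < k, Z j k < 0
      rcases lt_trichotomy i k with h | h | h
      · -- j < i < k? want i < k, Z i k < 0 : Z i k ≤ Z j k < 0 since 0 ≤ Z j i
        refine Or.inr (Or.inl ⟨h, ?_⟩)
        have := (key hZ hj hi hk hlt.le h.le).1 hz
        omega
      · exact Or.inl h
      · -- j < k < i, want 0 ≤ Z k i : if Z k i < 0 then Z j i ≤ Z k i < 0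
        refine Or.inr (Or.inr ⟨h, ?_⟩)
        by_contra hc
        have := (key hZ hj hk hi hlt'.le h.le).2 hz'.le
        omega
    · -- j < i, 0 ≤ Z j i ; k < j, 0 ≤ Z k j ; want k < i, 0 ≤ Z k i
      refine Or.inr (Or.inr ⟨by omega, ?_⟩)
      have := (key hZ hk hj hi hlt'.le hlt.le).1 hz'
      omega
  · intro i hi j hj
    rcases lt_trichotomy i j with h | h | h
    · rcases lt_or_ge (Z i j) 0 with h' | h'
      · exact Or.inl (Or.inr (Or.inl ⟨h, h'⟩))
      · exact Or.inr (Or.inr (Or.inr ⟨h, h'⟩))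
    · exact Or.inl (Or.inl h)
    · rcases lt_or_ge (Z j i) 0 with h' | h'
      · exact Or.inr (Or.inr (Or.inl ⟨h, h'⟩))
      · exact Or.inl (Or.inr (Or.inr ⟨h, h'⟩))
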